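/- Let X ∈ ℝ^{n×p} have columns x₁,…,xₚ and let y ∈ ℝⁿ be such that X and y satisfy the vertex non-cover condition, and let T = {Σ_{j=1}^p λⱼ·(xⱼ − y) : λⱼ ≥ 0}. If for some i ∈ [p] there is no θ > 0 with xᵢ + θ·(y − xᵢ) ∈ conv({x₁,…,xₚ}) (i.e., y ∉ xᵢ + T(xᵢ; conv({x₁,…,xₚ})), where T(x; S) = {w : x + λw ∈ S for some λ > 0}), then xᵢ − y generates an extreme ray of T. -/

import Mathlib

open Finset

noncomputable section

/-- A nonzero vector `w` generates an extreme ray of the convex cone `T`. -/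
def GeneratesExtremeRay {E : Type*} [AddCommGroup E] [Module ℝ E]
    (T : Set E) (w : E) : Prop :=
  w ≠ 0 ∧ w ∈ T ∧ ∀ w₁ w₂, w₁ ∈ T → w₂ ∈ T → w = w₁ + w₂ →
    (∃ c : ℝ, 0 ≤ c ∧ w₁ = c • w) ∧ (∃ c : ℝ, 0 ≤ c ∧ w₂ = c • w)

/-- `X` (with columns `x i`) and the point `v` satisfy the vertex non-cover condition. -/
def VertexNonCover {E : Type*} [AddCommGroup E] [Module ℝ E] {p : ℕ}
    (x : Fin p → E) (v : E) : Prop :=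
  (∀ i, v ≠ x i) ∧
    Set.extremePoints ℝ (convexHull ℝ (Set.range x ∪ {v})) = Set.range x ∪ {v}

/-- If an extreme point of a convex set is written as a convex combination of points
of the set, then every point carrying positive weight equals the extreme point. -/
lemma extreme_comb {E : Type*} [AddCommGroup E] [Module ℝ E] {A : Set E}
    (hA : Convex ℝ A) {ι : Type*} [DecidableEq ι] {s : Finset ι} {W : ι → ℝ} {P : ι → E}
    (hW0 : ∀ k ∈ s, 0 ≤ W k) (hW1 : ∑ k ∈ s, W k = 1) (hP : ∀ k ∈ s, P k ∈ A)
    {z : E} (hz : z ∈ Set.extremePoints ℝ A) (hzeq : z = ∑ k ∈ s, W k • P k)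
    {k₀ : ι} (hk₀ : k₀ ∈ s) (hpos : 0 < W k₀) : P k₀ = z := by
  have hadd : W k₀ + ∑ k ∈ s.erase k₀, W k = 1 := by
    rw [Finset.add_sum_erase _ _ hk₀]; exact hW1
  have hsplit : ∑ k ∈ s, W k • P k = W k₀ • P k₀ + ∑ k ∈ s.erase k₀, W k • P k :=
    (Finset.add_sum_erase _ (fun k => W k • P k) hk₀).symm
  have htle : W k₀ ≤ 1 := by
    rw [← hW1]
    exact Finset.single_le_sum hW0 hk₀
  rcases eq_or_lt_of_le htle with h1 | h1
  · have hrest : ∑ k ∈ s.erase k₀, W k = 0 := by linarith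
    have hz0 : ∀ k ∈ s.erase k₀, W k = 0 :=
      (Finset.sum_eq_zero_iff_of_nonneg
        (fun k hk => hW0 k (Finset.mem_of_mem_erase hk))).mp hrest
    have : ∑ k ∈ s.erase k₀, W k • P k = 0 :=
      Finset.sum_eq_zero fun k hk => by rw [hz0 k hk, zero_smul]
    rw [hzeq, hsplit, this, add_zero, h1, one_smul]
  · have h1t : (0:ℝ) < 1 - W k₀ := by linarith
    set b : E := (1 - W k₀)⁻¹ • ∑ k ∈ s.erase k₀, W k • P k with hb
    have hsum' : ∑ k ∈ s.erase k₀, W k = 1 - W k₀ := by linarith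
    have hbA : b ∈ A := by
      have hbeq : b = ∑ k ∈ s.erase k₀, ((1 - W k₀)⁻¹ * W k) • P k := by
        rw [hb, Finset.smul_sum]
        exact Finset.sum_congr rfl fun k _ => by rw [smul_smul]
      rw [hbeq]
      refine hA.sum_mem (fun k hk => mul_nonneg (le_of_lt (inv_pos.mpr h1t))
        (hW0 k (Finset.mem_of_mem_erase hk))) ?_
        (fun k hk => hP k (Finset.mem_of_mem_erase hk))
      rw [← Finset.mul_sum, hsum', inv_mul_cancel₀ h1t.ne']
    have hz2 : z = W k₀ • P k₀ + (1 - W k₀) • b := by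
      rw [hb, smul_inv_smul₀ h1t.ne', hzeq, hsplit]
    have hseg : z ∈ openSegment ℝ (P k₀) b :=
      ⟨W k₀, 1 - W k₀, hpos, h1t, by ring, hz2.symm⟩
    exact ((mem_extremePoints.mp hz).2 (P k₀) (hP k₀ hk₀) b hbA hseg).1

theorem stmt10 {n p : ℕ}
    (x : Fin p → EuclideanSpace ℝ (Fin n)) (y : EuclideanSpace ℝ (Fin n))
    (hvnc : VertexNonCover x y)
    (T : Set (EuclideanSpace ℝ (Fin n)))
    (hT : T = {v | ∃ lam : Fin p → ℝ, (∀ j, 0 ≤ lam j) ∧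
      v = ∑ j, lam j • (x j - y)})
    (i : Fin p)
    (hi : ¬ ∃ θ : ℝ, 0 < θ ∧ x i + θ • (y - x i) ∈ convexHull ℝ (Set.range x)) :
    GeneratesExtremeRay T (x i - y) := by
  classical
  obtain ⟨hne, hext⟩ := hvnc
  have hxiy : x i - y ≠ 0 := sub_ne_zero.mpr fun h => hne i h.symm
  subst hT
  refine ⟨hxiy, ⟨fun j => if j = i then 1 else 0, fun j => by by_cases h : j = i <;> simp [h], by
    simp [ite_smul]⟩, ?_⟩
  rintro w₁ w₂ ⟨l₁, hl₁, rfl⟩ ⟨l₂, hl₂, rfl⟩ heq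
  have hμ0 : ∀ j, 0 ≤ l₁ j + l₂ j := fun j => add_nonneg (hl₁ j) (hl₂ j)
  set s : ℝ := ∑ j, (l₁ j + l₂ j) with hs
  have hs0 : 0 ≤ s := Finset.sum_nonneg fun j _ => hμ0 j
  have heqμ : x i - y = ∑ j, (l₁ j + l₂ j) • (x j - y) := by
    rw [heq, ← Finset.sum_add_distrib]
    exact Finset.sum_congr rfl fun j _ => by rw [add_smul]
  have hx : x i = (∑ j, (l₁ j + l₂ j) • x j) + (1 - s) • y := by
    have h2 : ∑ j, (l₁ j + l₂ j) • (x j - y)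
        = (∑ j, (l₁ j + l₂ j) • x j) - s • y := by
      rw [hs, Finset.sum_smul, ← Finset.sum_sub_distrib]
      exact Finset.sum_congr rfl fun j _ => by rw [smul_sub]
    rw [h2] at heqμ
    have h3 : x i = (∑ j, (l₁ j + l₂ j) • x j) - s • y + y := by
      rw [← heqμ]; abel
    rw [h3, sub_smul, one_smul]; abel
  have hsle : s ≤ 1 := by
    by_contra hgt
    push_neg at hgt
    have hs' : (0:ℝ) < s := lt_trans one_pos hgt
    apply hi
    refine ⟨1 - s⁻¹, by
      have : s⁻¹ < 1 := inv_lt_one_of_one_lt₀ hgt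
      linarith, ?_⟩
    have hmem : ∑ j, ((l₁ j + l₂ j) / s) • x j ∈ convexHull ℝ (Set.range x) :=
      (convex_convexHull ℝ _).sum_mem
        (fun j _ => div_nonneg (hμ0 j) hs0)
        (by rw [← Finset.sum_div, ← hs, div_self hs'.ne'])
        (fun j _ => subset_convexHull ℝ _ ⟨j, rfl⟩)
    have hpt : x i + (1 - s⁻¹) • (y - x i) = ∑ j, ((l₁ j + l₂ j) / s) • x j := by
      have h3 : ∑ j, ((l₁ j + l₂ j) / s) • x j = s⁻¹ • ∑ j, (l₁ j + l₂ j) • x j := by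
        rw [Finset.smul_sum]
        exact Finset.sum_congr rfl fun j _ => by
          rw [smul_smul, div_eq_inv_mul]
      have h4 : ∑ j, (l₁ j + l₂ j) • x j = x i - (1 - s) • y := by
        rw [hx]; abel
      rw [h3, h4]
      match_scalars <;> field_simp <;> ring
    rw [hpt]; exact hmem
  -- extreme point machinery
  have hA := convex_convexHull ℝ (Set.range x ∪ {y})
  have hzext : x i ∈ Set.extremePoints ℝ (convexHull ℝ (Set.range x ∪ {y})) := by
    rw [hext]; exact Or.inl ⟨i, rfl⟩
  have key : ∀ j : Fin p, 0 < l₁ j + l₂ j → x j = x i := by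
    intro j hj
    have := extreme_comb (ι := Option (Fin p))
      (W := fun o => o.elim (1 - s) (fun j => l₁ j + l₂ j))
      (P := fun o => o.elim y x) (s := Finset.univ) hA
      (by rintro (_|k) _
          · simpa using sub_nonneg.mpr hsle
          · exact hμ0 k)
      (by rw [Fintype.sum_option]; simp only [Option.elim]; rw [← hs]; ring)
      (by rintro (_|k) _
          · exact subset_convexHull ℝ _ (Or.inr rfl)
          · exact subset_convexHull ℝ _ (Or.inl ⟨k, rfl⟩))
      hzext
      (by rw [Fintype.sum_option]; simp only [Option.elim]; rw [hx]; abel)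
      (k₀ := some j) (Finset.mem_univ _) hj
    exact this
  have hw : ∀ (l : Fin p → ℝ), (∀ j, 0 ≤ l j) → (∀ j, l j ≤ l₁ j + l₂ j) →
      ∑ j, l j • (x j - y) = (∑ j, l j) • (x i - y) := by
    intro l hl hlμ
    rw [Finset.sum_smul]
    refine Finset.sum_congr rfl fun j _ => ?_
    rcases eq_or_lt_of_le (hl j) with h0 | h0
    · rw [← h0, zero_smul, zero_smul]
    · rw [key j (lt_of_lt_of_le h0 (hlμ j))]
  exact ⟨⟨∑ j, l₁ j, Finset.sum_nonneg fun j _ => hl₁ j,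
      hw l₁ hl₁ fun j => le_add_of_nonneg_right (hl₂ j)⟩,
    ⟨∑ j, l₂ j, Finset.sum_nonneg fun j _ => hl₂ j,
      hw l₂ hl₂ fun j => le_add_of_nonneg_left (hl₁ j)⟩⟩
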